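/- For any directed cut matrix A, the FAS-QAP for A is linearizable: there exists a matrix C with QAP(A, F_n, π) = LAP(C, π) for all permutations π. -/

import Mathlib

open Finset

def QAP {n : ℕ} (A B : Matrix (Fin n) (Fin n) ℝ) (π : Equiv.Perm (Fin n)) : ℝ :=
  ∑ i, ∑ j, A (π i) (π j) * B i j

def LAP {n : ℕ} (C : Matrix (Fin n) (Fin n) ℝ) (π : Equiv.Perm (Fin n)) : ℝ :=
  ∑ i, C i (π i)

def Fmat (n : ℕ) : Matrix (Fin n) (Fin n) ℝ := fun i j => if j < i then 1 else 0

def Hmat (n : ℕ) : Matrix (Fin n) (Fin n) ℝ :=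
  fun i j => if (j : ℕ) = ((i : ℕ) + 1) % n then 1 else 0

def DirCut {n : ℕ} (I : Finset (Fin n)) : Matrix (Fin n) (Fin n) ℝ :=
  fun i j => if i ∈ I ∧ j ∉ I then 1 else 0

def Balanced3Cycle {n : ℕ} (A : Matrix (Fin n) (Fin n) ℝ) : Prop :=
  ∀ i j k, A i j + A j k + A k i = A j i + A k j + A i k

def Linearizable {n : ℕ} (A B : Matrix (Fin n) (Fin n) ℝ) : Prop :=
  ∃ C : Matrix (Fin n) (Fin n) ℝ, ∀ π : Equiv.Perm (Fin n), QAP A B π = LAP C π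

theorem stmt10 {n : ℕ} (I : Finset (Fin n)) :
    Linearizable (DirCut I) (Fmat n) := by
  classical
  set k : ℝ := (I.card : ℝ) with hk
  refine ⟨fun i j => (if j ∈ I then (i : ℝ) else 0) - (k ^ 2 - k) / 2 / n, fun π => ?_⟩
  rcases Nat.eq_zero_or_pos n with hn | hn
  · subst hn; simp [QAP, LAP]
  set a : Fin n → ℝ := fun i => if π i ∈ I then 1 else 0 with ha
  set S : ℝ := ∑ i, a i with hS
  set T : ℝ := ∑ i, ∑ j, if j < i then a i * a j else 0 with hT
  -- S = k
  have hSk : S = k := by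
    rw [hS, hk, ha]
    rw [Fintype.sum_equiv π (fun i => if π i ∈ I then (1:ℝ) else 0)
      (fun i => if i ∈ I then (1:ℝ) else 0) (fun i => rfl)]
    simp [Finset.sum_boole]
  -- S^2 = 2T + S
  have hsq : ∀ i, a i * a i = a i := by
    intro i; by_cases h : π i ∈ I <;> simp [ha, h]
  have hTswap : (∑ i, ∑ j, if i < j then a i * a j else 0) = T := by
    rw [hT, Finset.sum_comm]
    refine Finset.sum_congr rfl fun i _ => Finset.sum_congr rfl fun j _ => ?_
    split_ifs <;> ring
  have hS2 : S ^ 2 = 2 * T + S := by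
    have expand : S * S = ∑ i, ∑ j, a i * a j := by
      rw [hS, Finset.sum_mul_sum]
    have split : (∑ i, ∑ j, a i * a j)
        = (∑ i, ∑ j, if j < i then a i * a j else 0)
          + (∑ i, ∑ j, if i < j then a i * a j else 0)
          + ∑ i, a i := by
      rw [← Finset.sum_add_distrib, ← Finset.sum_add_distrib]
      refine Finset.sum_congr rfl fun i _ => ?_
      rw [← Finset.sum_add_distrib]
      have : ∀ j, a i * a j = (if j < i then a i * a j else 0)
          + (if i < j then a i * a j else 0) + (if j = i then a i * a j else 0) := by
        intro j
        rcases lt_trichotomy j i with h | h | h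
        · simp [h, not_lt.mpr h.le, h.ne]
        · simp [h, hsq]
        · simp [h, not_lt.mpr h.le, h.ne']
      rw [Finset.sum_congr rfl (fun j _ => this j), Finset.sum_add_distrib]
      congr 1
      rw [Finset.sum_ite_eq' univ i (fun j => a i * a j)]
      simp [hsq]
    rw [sq, expand, split, hTswap]; ring
  -- QAP computation
  have hQAP : QAP (DirCut I) (Fmat n) π = (∑ i, a i * i) - T := by
    unfold QAP DirCut Fmat
    have step : ∀ i j : Fin n,
        (if π i ∈ I ∧ π j ∉ I then (1:ℝ) else 0) * (if j < i then 1 else 0)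
          = (if j < i then a i else 0) - (if j < i then a i * a j else 0) := by
      intro i j
      rw [ha]
      by_cases h1 : π i ∈ I <;> by_cases h2 : π j ∈ I <;> by_cases h3 : j < i <;>
        simp [h1, h2, h3]
    calc ∑ i, ∑ j, (if π i ∈ I ∧ π j ∉ I then (1:ℝ) else 0) * (if j < i then 1 else 0)
        = ∑ i, ∑ j, ((if j < i then a i else 0) - (if j < i then a i * a j else 0)) := by
          exact Finset.sum_congr rfl fun i _ => Finset.sum_congr rfl fun j _ => step i j
      _ = (∑ i, ∑ j, if j < i then a i else 0) - T := by
          rw [hT, ← Finset.sum_sub_distrib]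
          exact Finset.sum_congr rfl fun i _ => Finset.sum_sub_distrib _ _
      _ = (∑ i, a i * i) - T := by
          congr 1
          refine Finset.sum_congr rfl fun i _ => ?_
          have hcard : univ.filter (fun j => j < i) = Finset.Iio i := by ext j; simp
          rw [Finset.sum_ite, Finset.sum_const_zero, add_zero, Finset.sum_const,
            hcard, Fin.card_Iio, nsmul_eq_mul, mul_comm]
    -- done
  -- LAP computation
  have hLAP : LAP (fun i j => (if j ∈ I then (i : ℝ) else 0) - (k ^ 2 - k) / 2 / n) π
      = (∑ i, a i * i) - (k ^ 2 - k) / 2 := by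
    unfold LAP
    rw [Finset.sum_sub_distrib, Finset.sum_const, Finset.card_univ, Fintype.card_fin,
      nsmul_eq_mul]
    have hn' : (n : ℝ) ≠ 0 := Nat.cast_ne_zero.mpr hn.ne'
    rw [mul_div_cancel₀ _ hn']
    congr 1
    refine Finset.sum_congr rfl fun i _ => ?_
    by_cases h : π i ∈ I <;> simp [ha, h]
  rw [hQAP, hLAP]
  have hTval : T = (k ^ 2 - k) / 2 := by
    rw [hSk] at hS2; linarith
  rw [hTval]
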